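/- Let G be a directed acyclic graph with terminal set T ⊆ V(G), and let M ⊆ V(G) be a set intersecting every odd T-path in G such that every node v ∈ s_G(M) has total degree (in-degree plus out-degree) at most one in G \ M. Then the underlying undirected graph of G \ M is bipartite with a bipartition (A, B) such that T ⊆ A. -/

import Mathlib

/-- A (simple) directed path in the directed graph `G`, represented as a nonempty
list of pairwise distinct vertices in which every consecutive pair is an edge of `G`. -/
def IsPath {V : Type*} (G : V → V → Prop) (p : List V) : Prop :=
  p ≠ [] ∧ p.Chain' G ∧ p.Nodup

/-- `p` is a directed path from `u` to `v` in `G`. -/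
def IsPathFrom {V : Type*} (G : V → V → Prop) (u v : V) (p : List V) : Prop :=
  IsPath G p ∧ p.head? = some u ∧ p.getLast? = some v

/-- The length (number of edges) of a path, given as its list of vertices. -/
def pathLen {V : Type*} (p : List V) : ℕ := p.length - 1

/-- The list of directed edges traversed by a path. -/
def edgesOf {V : Type*} (p : List V) : List (V × V) := p.zip p.tail

/-- A directed graph is acyclic (a DAG) if no vertex lies on a directed cycle. -/
def Acyclic {V : Type*} (G : V → V → Prop) : Prop :=
  ∀ v, ¬ Relation.TransGen G v v

/-- The graph obtained from `G` by deleting the vertex set `M`. -/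
def delV {V : Type*} (G : V → V → Prop) (M : Set V) : V → V → Prop :=
  fun a b => G a b ∧ a ∉ M ∧ b ∉ M

/-- The forward shadow of `M`: vertices `v ∉ M` such that every path from a
terminal to `v` in `G` intersects `M`. -/
def fShadow {V : Type*} (G : V → V → Prop) (T M : Set V) : Set V :=
  {v | v ∉ M ∧ ∀ t ∈ T, ∀ p, IsPathFrom G t v p → ∃ z ∈ p, z ∈ M}

/-- The reverse shadow of `M`: vertices `v ∉ M` such that every path from `v`
to a terminal in `G` intersects `M`. -/
def rShadow {V : Type*} (G : V → V → Prop) (T M : Set V) : Set V :=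
  {v | v ∉ M ∧ ∀ t ∈ T, ∀ p, IsPathFrom G v t p → ∃ z ∈ p, z ∈ M}

section Aux

variable {V : Type*} {G : V → V → Prop} {T M : Set V}

lemma chain'_transGen_tail :
    ∀ (p : List V) (a : V), (a :: p).Chain' G → ∀ y ∈ p, Relation.TransGen G a y := by
  intro p
  induction p with
  | nil => intro a _ y hy; simp at hy
  | cons b r ih =>
    intro a hch y hy
    replace hch := List.isChain_cons_cons.mp hch
    rcases List.mem_cons.mp hy with rfl | hy
    · exact Relation.TransGen.single hch.1
    · exact (Relation.TransGen.single hch.1).trans (ih b hch.2 y hy)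

lemma chain'_reflTransGen_last :
    ∀ (p : List V), p.Chain' G → ∀ x ∈ p, ∀ y, p.getLast? = some y →
      Relation.ReflTransGen G x y := by
  intro p
  induction p with
  | nil => intro _ x hx; simp at hx
  | cons a rest ih =>
    intro hch x hx y hy
    cases rest with
    | nil =>
      simp at hx hy
      subst hx; subst hy
      exact Relation.ReflTransGen.refl
    | cons b r =>
      replace hch := List.isChain_cons_cons.mp hch
      have hy' : (b :: r).getLast? = some y := by
        rwa [List.getLast?_cons_cons] at hy
      rcases List.mem_cons.mp hx with rfl | hx
      · exact Relation.ReflTransGen.head hch.1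
          (ih hch.2 b (List.mem_cons_self (a := b) (l := r)) y hy')
      · exact ih hch.2 x hx y hy'

lemma path_append (hG : Acyclic G) {t v t' : V} {p q : List V}
    (hp : IsPathFrom G t v p) (hq : IsPathFrom G v t' q) :
    IsPathFrom G t t' (p ++ q.tail) ∧
      pathLen (p ++ q.tail) = pathLen p + pathLen q := by
  obtain ⟨⟨hpne, hpch, hpnd⟩, hph, hpl⟩ := hp
  obtain ⟨⟨hqne, hqch, hqnd⟩, hqh, hql⟩ := hq
  have hq' : v :: q.tail = q := List.cons_head?_tail hqh
  have hqch' : (v :: q.tail).Chain' G := by rw [hq']; exact hqch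
  have hqnd' : (v :: q.tail).Nodup := by rw [hq']; exact hqnd
  have hdisj : ∀ w ∈ p, w ∈ q.tail → False := by
    intro w hwp hwq
    have h1 : Relation.ReflTransGen G w v :=
      chain'_reflTransGen_last p hpch w hwp v hpl
    have h2 : Relation.TransGen G v w :=
      chain'_transGen_tail q.tail v hqch' w hwq
    exact hG v (h2.trans_left h1)
  have hnd : (p ++ q.tail).Nodup := by
    rw [List.nodup_append]
    exact ⟨hpnd, hqnd'.of_cons, fun a ha b hb hab => hdisj a ha (hab ▸ hb)⟩
  have hch : (p ++ q.tail).Chain' G := by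
    rw [show (p ++ q.tail).Chain' G ↔ _ from List.isChain_append]
    refine ⟨hpch, (List.isChain_cons.mp hqch').2, ?_⟩
    intro x hx y hy
    have hx' : x = v := by
      rw [hpl] at hx
      exact (Option.mem_some_iff.mp hx).symm
    subst hx'
    exact (List.isChain_cons.mp hqch').1 y hy
  have hpe : t :: p.tail = p := List.cons_head?_tail hph
  have hhead : (p ++ q.tail).head? = some t := by
    rw [← hpe]; rfl
  have hlast : (p ++ q.tail).getLast? = some t' := by
    cases hqt : q.tail with
    | nil =>
      have : q = [v] := by rw [← hq', hqt]
      rw [this] at hql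
      simp at hql
      rw [List.append_nil, hpl, hql]
    | cons b r =>
      rw [List.getLast?_append_cons, ← hql, ← hq', hqt, List.getLast?_cons_cons]
  have hlen : pathLen (p ++ q.tail) = pathLen p + pathLen q := by
    have h1 : 1 ≤ p.length := List.length_pos_iff.mpr hpne
    have h2 : q.length = q.tail.length + 1 := by
      rw [← hq']; simp
    simp only [pathLen, List.length_append]
    omega
  exact ⟨⟨⟨by simp [hpne], hch, hnd⟩, hhead, hlast⟩, hlen⟩

lemma path_singleton (t : V) : IsPathFrom G t t [t] :=
  ⟨⟨by simp, List.isChain_singleton t, by simp⟩, rfl, rfl⟩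

lemma path_snoc (hG : Acyclic G) {t a b : V} {p : List V}
    (hp : IsPathFrom G t a p) (hGab : G a b) :
    IsPathFrom G t b (p ++ [b]) ∧ pathLen (p ++ [b]) = pathLen p + 1 := by
  have hne : a ≠ b := by
    intro h; exact hG a (Relation.TransGen.single (by rwa [← h] at hGab))
  have h2 : IsPathFrom G a b [a, b] :=
    ⟨⟨by simp, List.isChain_pair.mpr hGab, by simp [hne]⟩, rfl, by simp⟩
  have := path_append hG hp h2
  simpa [pathLen] using this

lemma exists_out {v : V} (hv : v ∉ M) (hr : v ∉ rShadow G T M) :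
    ∃ q : List V, (∃ t ∈ T, IsPathFrom G v t q) ∧ ∀ z ∈ q, z ∉ M := by
  by_contra hcon
  push_neg at hcon
  apply hr
  refine ⟨hv, fun t ht p hp => ?_⟩
  obtain ⟨z, hz, hzM⟩ := hcon p ⟨t, ht, hp⟩
  exact ⟨z, hz, hzM⟩

lemma exists_in {v : V} (hv : v ∉ M) (hf : v ∉ fShadow G T M) :
    ∃ t ∈ T, ∃ p, IsPathFrom G t v p ∧ ∀ z ∈ p, z ∉ M := by
  by_contra hcon
  push_neg at hcon
  apply hf
  refine ⟨hv, fun t ht p hp => ?_⟩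
  obtain ⟨z, hz, hzM⟩ := hcon t ht p hp
  exact ⟨z, hz, hzM⟩

lemma terminal_not_shadow (hTM : ∀ t ∈ T, t ∉ M) {t : V} (ht : t ∈ T) :
    t ∉ fShadow G T M ∪ rShadow G T M := by
  have htm := hTM t ht
  rintro (⟨_, h⟩ | ⟨_, h⟩) <;>
    · obtain ⟨z, hz, hzM⟩ := h t ht [t] (path_singleton t)
      simp at hz
      exact htm (hz ▸ hzM)

open Classical in
variable (G T M) in
/-- Parity color for vertices having an `M`-free path to a terminal:
`true` iff the chosen such path is even. -/
noncomputable def psi (v : V) : Bool :=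
  if h : ∃ q : List V, (∃ t ∈ T, IsPathFrom G v t q) ∧ ∀ z ∈ q, z ∉ M
  then decide (Even (pathLen h.choose)) else true

lemma psi_spec (hG : Acyclic G)
    (hM : ∀ u ∈ T, ∀ v ∈ T, ∀ p, IsPathFrom G u v p → Odd (pathLen p) →
      ∃ z ∈ p, z ∈ M)
    {v : V}
    (hex : ∃ q : List V, (∃ t ∈ T, IsPathFrom G v t q) ∧ ∀ z ∈ q, z ∉ M)
    {t : V} (ht : t ∈ T) {p : List V} (hp : IsPathFrom G t v p)
    (hpf : ∀ z ∈ p, z ∉ M) :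
    (psi G T M v = true ↔ Even (pathLen p)) := by
  rw [psi, dif_pos hex]
  obtain ⟨⟨t', ht', hq⟩, hqf⟩ := hex.choose_spec
  obtain ⟨happ, hlen⟩ := path_append hG hp hq
  have heven : Even (pathLen p + pathLen hex.choose) := by
    by_contra hodd
    rw [Nat.not_even_iff_odd] at hodd
    obtain ⟨z, hz, hzM⟩ := hM t ht t' ht' _ happ (hlen ▸ hodd)
    rcases List.mem_append.mp hz with hz1 | hz1
    · exact hpf z hz1 hzM
    · exact hqf z (List.mem_of_mem_tail hz1) hzM
  rw [Nat.even_add] at heven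
  rw [decide_eq_true_eq]
  exact heven.symm

lemma psi_terminal (hG : Acyclic G) (hTM : ∀ t ∈ T, t ∉ M)
    (hM : ∀ u ∈ T, ∀ v ∈ T, ∀ p, IsPathFrom G u v p → Odd (pathLen p) →
      ∃ z ∈ p, z ∈ M)
    {t : V} (ht : t ∈ T) : psi G T M t = true := by
  have hts := terminal_not_shadow (G := G) hTM ht
  have hex := exists_out (hTM t ht)
    (fun h => hts (Set.mem_union_right _ h))
  refine (psi_spec hG hM hex ht (path_singleton t) ?_).mpr ?_
  · intro z hz; simp at hz; exact hz ▸ hTM t ht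
  · simp [pathLen]

lemma psi_ne (hG : Acyclic G)
    (hM : ∀ u ∈ T, ∀ v ∈ T, ∀ p, IsPathFrom G u v p → Odd (pathLen p) →
      ∃ z ∈ p, z ∈ M)
    {a b : V} (haM : a ∉ M) (hbM : b ∉ M)
    (haf : a ∉ fShadow G T M) (har : a ∉ rShadow G T M)
    (hbr : b ∉ rShadow G T M) (hGab : G a b) :
    psi G T M a ≠ psi G T M b := by
  obtain ⟨t, ht, p, hp, hpf⟩ := exists_in haM haf
  obtain ⟨hp', hlen'⟩ := path_snoc hG hp hGab
  have hm1 := psi_spec hG hM (exists_out haM har) ht hp hpf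
  have hm2 := psi_spec hG hM (exists_out hbM hbr) ht hp'
    (fun z hz => by
      rcases List.mem_append.mp hz with hz1 | hz1
      · exact hpf z hz1
      · simp at hz1; exact hz1 ▸ hbM)
  intro heq
  rw [hlen', Nat.even_add_one] at hm2
  rw [heq] at hm1
  exact iff_not_self (hm1.symm.trans hm2)

open Classical in
variable (G T M) in
/-- Full coloring: non-shadow vertices are colored by parity; shadow vertices
(having degree at most one) are colored opposite to their unique neighbor. -/
noncomputable def phi (v : V) : Bool :=
  if v ∈ fShadow G T M ∪ rShadow G T M then
    if h : ∃ w, (delV G M v w ∨ delV G M w v) ∧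
        w ∉ fShadow G T M ∪ rShadow G T M then
      !(psi G T M h.choose)
    else if ∃ w, delV G M v w then false else true
  else psi G T M v

lemma phi_ne (hG : Acyclic G)
    (hM : ∀ u ∈ T, ∀ v ∈ T, ∀ p, IsPathFrom G u v p → Odd (pathLen p) →
      ∃ z ∈ p, z ∈ M)
    (hdeg : ∀ x ∈ fShadow G T M ∪ rShadow G T M,
      Set.Subsingleton {e : V × V | delV G M e.1 e.2 ∧ (e.1 = x ∨ e.2 = x)})
    {a b : V} (hab : delV G M a b) : phi G T M a ≠ phi G T M b := by
  have hGab := hab.1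
  have haM := hab.2.1
  have hbM := hab.2.2
  have hne : a ≠ b := fun h => hG a (Relation.TransGen.single (by rwa [← h] at hGab))
  by_cases haS : a ∈ fShadow G T M ∪ rShadow G T M <;>
    by_cases hbS : b ∈ fShadow G T M ∪ rShadow G T M
  · -- both endpoints in the shadow: `a` gets `false`, `b` gets `true`
    have hpa : phi G T M a = false := by
      rw [phi, if_pos haS]
      have h1 : ¬ ∃ w, (delV G M a w ∨ delV G M w a) ∧
          w ∉ fShadow G T M ∪ rShadow G T M := by
        rintro ⟨w, hw1 | hw1, hw2⟩
        · have he := hdeg a haS (show ((a, w) : V × V) ∈ _ from ⟨hw1, Or.inl rfl⟩)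
            (show ((a, b) : V × V) ∈ _ from ⟨hab, Or.inl rfl⟩)
          rw [Prod.mk.injEq] at he
          exact hw2 (he.2 ▸ hbS)
        · have he := hdeg a haS (show ((w, a) : V × V) ∈ _ from ⟨hw1, Or.inr rfl⟩)
            (show ((a, b) : V × V) ∈ _ from ⟨hab, Or.inl rfl⟩)
          rw [Prod.mk.injEq] at he
          exact hne he.2
      rw [dif_neg h1, if_pos ⟨b, hab⟩]
    have hpb : phi G T M b = true := by
      rw [phi, if_pos hbS]
      have h1 : ¬ ∃ w, (delV G M b w ∨ delV G M w b) ∧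
          w ∉ fShadow G T M ∪ rShadow G T M := by
        rintro ⟨w, hw1 | hw1, hw2⟩
        · have he := hdeg b hbS (show ((b, w) : V × V) ∈ _ from ⟨hw1, Or.inl rfl⟩)
            (show ((a, b) : V × V) ∈ _ from ⟨hab, Or.inr rfl⟩)
          rw [Prod.mk.injEq] at he
          exact hne he.1.symm
        · have he := hdeg b hbS (show ((w, b) : V × V) ∈ _ from ⟨hw1, Or.inr rfl⟩)
            (show ((a, b) : V × V) ∈ _ from ⟨hab, Or.inr rfl⟩)
          rw [Prod.mk.injEq] at he
          exact hw2 (he.1 ▸ haS)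
      have h2 : ¬ ∃ w, delV G M b w := by
        rintro ⟨w, hw⟩
        have he := hdeg b hbS (show ((b, w) : V × V) ∈ _ from ⟨hw, Or.inl rfl⟩)
          (show ((a, b) : V × V) ∈ _ from ⟨hab, Or.inr rfl⟩)
        rw [Prod.mk.injEq] at he
        exact hne he.1.symm
      rw [dif_neg h1, if_neg h2]
    rw [hpa, hpb]
    simp
  · -- `a` in the shadow, `b` not: `a` gets the color opposite to `b`
    have h : ∃ w, (delV G M a w ∨ delV G M w a) ∧
        w ∉ fShadow G T M ∪ rShadow G T M := ⟨b, Or.inl hab, hbS⟩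
    have hweq : h.choose = b := by
      obtain ⟨hw1 | hw1, hw2⟩ := h.choose_spec
      · have he := hdeg a haS
          (show ((a, h.choose) : V × V) ∈ _ from ⟨hw1, Or.inl rfl⟩)
          (show ((a, b) : V × V) ∈ _ from ⟨hab, Or.inl rfl⟩)
        rw [Prod.mk.injEq] at he
        exact he.2
      · have he := hdeg a haS
          (show ((h.choose, a) : V × V) ∈ _ from ⟨hw1, Or.inr rfl⟩)
          (show ((a, b) : V × V) ∈ _ from ⟨hab, Or.inl rfl⟩)
        rw [Prod.mk.injEq] at he
        exact absurd he.2 hne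
    rw [phi, if_pos haS, dif_pos h, hweq]
    conv_rhs => rw [phi, if_neg hbS]
    simp
  · -- `b` in the shadow, `a` not
    have h : ∃ w, (delV G M b w ∨ delV G M w b) ∧
        w ∉ fShadow G T M ∪ rShadow G T M := ⟨a, Or.inr hab, haS⟩
    have hweq : h.choose = a := by
      obtain ⟨hw1 | hw1, hw2⟩ := h.choose_spec
      · have he := hdeg b hbS
          (show ((b, h.choose) : V × V) ∈ _ from ⟨hw1, Or.inl rfl⟩)
          (show ((a, b) : V × V) ∈ _ from ⟨hab, Or.inr rfl⟩)
        rw [Prod.mk.injEq] at he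
        exact absurd he.1.symm hne
      · have he := hdeg b hbS
          (show ((h.choose, b) : V × V) ∈ _ from ⟨hw1, Or.inr rfl⟩)
          (show ((a, b) : V × V) ∈ _ from ⟨hab, Or.inr rfl⟩)
        rw [Prod.mk.injEq] at he
        exact he.1
    conv_rhs => rw [phi, if_pos hbS]
    rw [dif_pos h, hweq, phi, if_neg haS]
    simp
  · -- both outside the shadow: parity coloring
    rw [phi, if_neg haS]
    conv_rhs => rw [phi, if_neg hbS]
    exact psi_ne hG hM haM hbM
      (fun hx => haS (Set.mem_union_left _ hx))
      (fun hx => haS (Set.mem_union_right _ hx))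
      (fun hx => hbS (Set.mem_union_right _ hx)) hGab

end Aux

/-- **(Hard direction of Theorem 2.2.)**
Let `G` be a DAG with terminal set `T` (terminals are not deleted, reflecting
`T ⊆ V^∞` and `M ∩ V^∞ = ∅` in the OddMultiwayNodeCut instance), and let `M`
be a set intersecting every odd `T`-path of `G` such that every vertex of the
shadow `s_G(M) = f_G(M) ∪ r_G(M)` is incident to at most one edge of `G \ M`
(total degree at most one).  Then the underlying undirected graph of `G \ M`
is bipartite with a bipartition `(A, B)` satisfying `T ⊆ A`. -/
theorem easy_instance_bipartite {V : Type*} (G : V → V → Prop) (hG : Acyclic G)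
    (T M : Set V) (hTM : ∀ t ∈ T, t ∉ M)
    (hM : ∀ u ∈ T, ∀ v ∈ T, ∀ p, IsPathFrom G u v p → Odd (pathLen p) →
      ∃ z ∈ p, z ∈ M)
    (hdeg : ∀ x ∈ fShadow G T M ∪ rShadow G T M,
      Set.Subsingleton {e : V × V | delV G M e.1 e.2 ∧ (e.1 = x ∨ e.2 = x)}) :
    ∃ A B : Set V, A ∪ B = Mᶜ ∧ Disjoint A B ∧
      (∀ a b, (delV G M a b ∨ delV G M b a) →
        ((a ∈ A ∧ b ∈ B) ∨ (a ∈ B ∧ b ∈ A))) ∧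
      T ⊆ A := by
  classical
  have key : ∀ a b : V, delV G M a b → phi G T M a ≠ phi G T M b :=
    fun a b hab => phi_ne hG hM hdeg hab
  refine ⟨{v | v ∉ M ∧ phi G T M v = true}, {v | v ∉ M ∧ phi G T M v = false},
    ?_, ?_, ?_, ?_⟩
  · ext v
    simp only [Set.mem_union, Set.mem_setOf_eq, Set.mem_compl_iff]
    rcases Bool.eq_false_or_eq_true (phi G T M v) with h | h <;> simp [h]
  · rw [Set.disjoint_left]
    rintro v ⟨_, h1⟩ ⟨_, h2⟩
    rw [h1] at h2
    exact Bool.noConfusion h2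
  · rintro a b (hab | hba)
    · have hne := key a b hab
      rcases Bool.eq_false_or_eq_true (phi G T M a) with h | h
      · refine Or.inl ⟨⟨hab.2.1, h⟩, hab.2.2, ?_⟩
        rcases Bool.eq_false_or_eq_true (phi G T M b) with h2 | h2
        · exact absurd (h.trans h2.symm) hne
        · exact h2
      · refine Or.inr ⟨⟨hab.2.1, h⟩, hab.2.2, ?_⟩
        rcases Bool.eq_false_or_eq_true (phi G T M b) with h2 | h2
        · exact h2
        · exact absurd (h.trans h2.symm) hne
    · have hne := key b a hba
      rcases Bool.eq_false_or_eq_true (phi G T M a) with h | h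
      · refine Or.inl ⟨⟨hba.2.2, h⟩, hba.2.1, ?_⟩
        rcases Bool.eq_false_or_eq_true (phi G T M b) with h2 | h2
        · exact absurd (h2.trans h.symm) hne
        · exact h2
      · refine Or.inr ⟨⟨hba.2.2, h⟩, hba.2.1, ?_⟩
        rcases Bool.eq_false_or_eq_true (phi G T M b) with h2 | h2
        · exact h2
        · exact absurd (h2.trans h.symm) hne
  · intro t ht
    refine ⟨hTM t ht, ?_⟩
    rw [phi, if_neg (terminal_not_shadow hTM ht)]
    exact psi_terminal hG hTM hM ht
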